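/- arXiv:1203.0334 — 2 statements merged into one kernel-verified Lean document; each statement's English description precedes it below -/
import Mathlib

section
/- Let π = σ ∪ ρ as above. If the closure D̄_σ of D_σ under =_ρ is not closed under =_σ (i.e. there exist words r,s ∈ A* with r·s nonempty and u ∈ D_σ such that r·u·s ∈ D̄_σ), then no word containing an element of D_σ as a factor is square-free relative to π; consequently, for every word w square-free relative to π, [w]_π = [w]_ρ. -/
namespace SqFreePaper

variable {A : Type*}

/-- A word is square-free if it contains no nonempty factor of the form `s ++ s`. -/
def IsSquareFreeWord (w : List A) : Prop :=
  ∀ u s v : List A, w = u ++ s ++ s ++ v → s = []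

/-- One-step rewriting relation associated with a system of defining relations `π`. -/
def OneStep (π : List A → List A → Prop) (x y : List A) : Prop :=
  ∃ r s u v : List A, x = r ++ u ++ s ∧ y = r ++ v ++ s ∧ (π u v ∨ π v u)

/-- The congruence `=_π` generated by `π`: reflexive-transitive closure of one-step rewriting. -/
def EqRel (π : List A → List A → Prop) : List A → List A → Prop :=
  Relation.ReflTransGen (OneStep π)

/-- `w` is square-free relative to `π`: every word in its `=_π`-class is square-free. -/
def SFRel (π : List A → List A → Prop) (w : List A) : Prop :=
  ∀ z, EqRel π w z → IsSquareFreeWord z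

/-- Union of two systems of defining relations. -/
def PiRel (σ ρ : List A → List A → Prop) (x y : List A) : Prop := σ x y ∨ ρ x y

/-- The set of defining words of a system `σ`. -/
def DWords (σ : List A → List A → Prop) : Set (List A) :=
  {x | ∃ y, σ x y ∨ σ y x}

/-- The closure of `D_σ` under the congruence `=_ρ`. -/
def ClosureD (σ ρ : List A → List A → Prop) : Set (List A) :=
  {x | ∃ w ∈ DWords σ, EqRel ρ w x}

/-- The system `{(u_i, u_j) : i < j}` determined by a finite family of words. -/
def FamilyRel {n : ℕ} (u : Fin n → List A) (x y : List A) : Prop :=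
  ∃ i j : Fin n, i < j ∧ x = u i ∧ y = u j

/-- `x ~ y` iff both lie in `D̄_σ` or both lie in `D̄_ρ`. -/
def Sim (σ ρ : List A → List A → Prop) (x y : List A) : Prop :=
  (x ∈ ClosureD σ ρ ∧ y ∈ ClosureD σ ρ) ∨ (x ∈ ClosureD ρ σ ∧ y ∈ ClosureD ρ σ)

/-- `D_τ = D̄_σ ∪ D̄_ρ`. -/
def DTau (σ ρ : List A → List A → Prop) : Set (List A) :=
  ClosureD σ ρ ∪ ClosureD ρ σ

/-- The concatenation `x_a ++ x_{a+1} ++ ⋯ ++ x_{a+len-1}`. -/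
def wordSeg (x : ℕ → List A) (a len : ℕ) : List A :=
  ((List.range' a len).map x).flatten

/-- Standing hypotheses of the paper: `D̄_σ`, `D̄_ρ` are finite, nonempty, disjoint,
and closed under `=_σ`, `=_ρ` respectively. -/
def SettingHyps (σ ρ : List A → List A → Prop) : Prop :=
  (ClosureD σ ρ).Finite ∧ (ClosureD ρ σ).Finite ∧
  (ClosureD σ ρ).Nonempty ∧ (ClosureD ρ σ).Nonempty ∧
  (ClosureD σ ρ ∩ ClosureD ρ σ = ∅) ∧
  (∀ x ∈ ClosureD σ ρ, ∀ y, EqRel σ x y → y ∈ ClosureD σ ρ) ∧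
  (∀ x ∈ ClosureD ρ σ, ∀ y, EqRel ρ x y → y ∈ ClosureD ρ σ)

/-- `x_1, …, x_n` (with complementary members `p_i`, `q_i`) is a linear decomposition. -/
def IsLinDecomp (σ ρ : List A → List A → Prop) (n : ℕ) (x p q : ℕ → List A) : Prop :=
  1 ≤ n ∧
  (∀ i, 1 ≤ i → i ≤ n → x i ≠ []) ∧
  (∃ u v : ℕ → List A,
    (∀ i, 1 < i → i ≤ n → Sim σ ρ (p i ++ x i ++ q i) (q (i-1) ++ u i)) ∧
    (∀ i, 1 ≤ i → i < n → Sim σ ρ (p i ++ x i ++ q i) (v i ++ p (i+1)))) ∧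
  (∀ i, 1 ≤ i → i < n → q i = [] ∨ p (i+1) = []) ∧
  p 1 = [] ∧ q n = [] ∧ (n = 1 → x 1 ∈ DTau σ ρ)

/-- `Lin(n)`: words with a linear decomposition of at most `n` members. -/
def LinSet (σ ρ : List A → List A → Prop) (n : ℕ) : Set (List A) :=
  {w | ∃ m, 1 ≤ m ∧ m ≤ n ∧ ∃ x p q, IsLinDecomp σ ρ m x p q ∧ w = wordSeg x 1 m}

/-- `Lin = ⋃ₙ Lin(n)`: linearly decomposable words. -/
def LinAll (σ ρ : List A → List A → Prop) : Set (List A) :=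
  {w | ∃ n, w ∈ LinSet σ ρ n}

/-- Occurrence `(r, d, s)` contains occurrence `(p, e, q)` (of the same word)
iff `|r| ≤ |p|` and `|s| ≤ |q|`. -/
def Contained (p q r s : List A) : Prop := r.length ≤ p.length ∧ s.length ≤ q.length

/-- Two occurrences in `w` overlap iff some occurrence of a nonempty word is
contained in both. -/
def Overlap (w p q r s : List A) : Prop :=
  ∃ a f b : List A, f ≠ [] ∧ w = a ++ f ++ b ∧ Contained a b p q ∧ Contained a b r s

/-- `(p, e, q)` is a maximal occurrence in `w` of a word `e` in the set `L`. -/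
def MaximalOcc (L : Set (List A)) (w p e q : List A) : Prop :=
  w = p ++ e ++ q ∧ e ∈ L ∧
  ∀ r d s, w = r ++ d ++ s → d ∈ L → Contained p q r s → r = p ∧ d = e ∧ s = q

lemma eqrel_lift (π : List A → List A → Prop) (a b : List A) {x y : List A}
    (h : EqRel π x y) : EqRel π (a ++ x ++ b) (a ++ y ++ b) := by
  induction h with
  | refl => exact .refl
  | tail _ h2 ih =>
    obtain ⟨r, s, u', v', hx, hy, hrel⟩ := h2
    refine ih.tail ⟨a ++ r, s ++ b, u', v', ?_, ?_, hrel⟩ <;>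
      simp [hx, hy, List.append_assoc]

lemma eqrel_mono {π π' : List A → List A → Prop} (hsub : ∀ x y, π x y → π' x y)
    {x y : List A} (h : EqRel π x y) : EqRel π' x y := by
  induction h with
  | refl => exact .refl
  | tail _ h2 ih =>
    obtain ⟨r, s, u', v', hx, hy, hrel⟩ := h2
    exact ih.tail ⟨r, s, u', v', hx, hy, hrel.imp (hsub _ _) (hsub _ _)⟩

lemma mem_dwords_family {n : ℕ} {u : Fin n → List A} {e : List A}
    (he : e ∈ DWords (FamilyRel u)) : ∃ i, e = u i := by
  obtain ⟨y, hy | hy⟩ := he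
  · obtain ⟨i, j, _, h1, _⟩ := hy; exact ⟨i, h1⟩
  · obtain ⟨i, j, _, _, h2⟩ := hy; exact ⟨j, h2⟩

lemma dwords_step {n : ℕ} {u : Fin n → List A} (ρ : List A → List A → Prop)
    {e e' : List A} (he : e ∈ DWords (FamilyRel u)) (he' : e' ∈ DWords (FamilyRel u))
    (a b : List A) :
    EqRel (PiRel (FamilyRel u) ρ) (a ++ e ++ b) (a ++ e' ++ b) := by
  obtain ⟨i, rfl⟩ := mem_dwords_family he
  obtain ⟨j, rfl⟩ := mem_dwords_family he'
  rcases lt_trichotomy i j with h | h | h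
  · exact .single ⟨a, b, u i, u j, rfl, rfl, Or.inl (Or.inl ⟨i, j, h, rfl, rfl⟩)⟩
  · subst h; exact .refl
  · exact .single ⟨a, b, u i, u j, rfl, rfl, Or.inr (Or.inl ⟨j, i, h, rfl, rfl⟩)⟩

/-- if `D̄_σ` is not closed under `=_σ`, then no word containing an element
of `D_σ` as a factor is square-free relative to `π`; consequently `[w]_π = [w]_ρ`
for every `w` square-free relative to `π`. -/
theorem not_closed_case {A : Type*} {nu nv : ℕ}
    (u : Fin nu → List A) (v : Fin nv → List A)
    (hu : Function.Injective u) (hv : Function.Injective v)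
    (σ ρ : List A → List A → Prop) (hσ : σ = FamilyRel u) (hρ : ρ = FamilyRel v)
    (hnc : ∃ r s d : List A, r ++ s ≠ [] ∧ d ∈ DWords σ ∧ r ++ d ++ s ∈ ClosureD σ ρ) :
    (∀ w : List A, (∃ d ∈ DWords σ, d <:+: w) → ¬ SFRel (PiRel σ ρ) w) ∧
    (∀ w : List A, SFRel (PiRel σ ρ) w →
      {z | EqRel (PiRel σ ρ) w z} = {z | EqRel ρ w z}) := by

  have key : ∀ w : List A, (∃ d ∈ DWords σ, d <:+: w) → ¬ SFRel (PiRel σ ρ) w := by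
    rintro w ⟨e, he, a, b, hab⟩ hsf
    obtain ⟨r, s, d, hrs, hd, d', hd', hρd⟩ := hnc
    have hρπ : ∀ x y : List A, ρ x y → PiRel σ ρ x y := fun x y h => Or.inr h
    subst hσ
    have h1 : EqRel (PiRel (FamilyRel u) ρ) w (a ++ d' ++ b) := by
      rw [← hab]; exact dwords_step ρ he hd' a b
    have h2 : EqRel (PiRel (FamilyRel u) ρ) (a ++ d' ++ b) (a ++ (r ++ d ++ s) ++ b) :=
      eqrel_mono hρπ (eqrel_lift ρ a b hρd)
    have h3 : EqRel (PiRel (FamilyRel u) ρ) ((a ++ r) ++ d ++ (s ++ b))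
        ((a ++ r) ++ d' ++ (s ++ b)) := dwords_step ρ hd hd' _ _
    have h4 : EqRel (PiRel (FamilyRel u) ρ) ((a ++ r) ++ d' ++ (s ++ b))
        ((a ++ r) ++ (r ++ d ++ s) ++ (s ++ b)) :=
      eqrel_mono hρπ (eqrel_lift ρ _ _ hρd)
    have heq : a ++ (r ++ d ++ s) ++ b = (a ++ r) ++ d ++ (s ++ b) := by
      simp [List.append_assoc]
    have hw : EqRel (PiRel (FamilyRel u) ρ) w ((a ++ r) ++ (r ++ d ++ s) ++ (s ++ b)) :=
      ((h1.trans h2).trans (heq ▸ h3)).trans h4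
    have hz := hsf _ hw
    by_cases hr : r = []
    · have hs : s ≠ [] := by simpa [hr] using hrs
      exact hs (hz (a ++ d) s b (by simp [hr, List.append_assoc]))
    · exact hr (hz a r (d ++ s ++ s ++ b) (by simp [List.append_assoc]))
  refine ⟨key, ?_⟩
  intro w hsf
  ext z
  simp only [Set.mem_setOf_eq]
  constructor
  · intro h
    induction h with
    | refl => exact .refl
    | tail h1 h2 ih =>
      rename_i b c
      obtain ⟨r', s', u', v', hx, hy, hrel⟩ := h2
      have hσu : (σ u' v' ∨ σ v' u') → False := by
        rintro hσr
        have hu' : u' ∈ DWords σ := by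
          rcases hσr with h | h
          · exact ⟨v', Or.inl h⟩
          · exact ⟨v', Or.inr h⟩
        have hinf : u' <:+: b := ⟨r', s', hx.symm⟩
        have hsfb : SFRel (PiRel σ ρ) b := fun y hy => hsf y (h1.trans hy)
        exact key b ⟨u', hu', hinf⟩ hsfb
      rcases hrel with (h | h) | (h | h)
      · exact absurd (Or.inl h) hσu
      · exact ih.tail ⟨r', s', u', v', hx, hy, Or.inl h⟩
      · exact absurd (Or.inr h) hσu
      · exact ih.tail ⟨r', s', u', v', hx, hy, Or.inr h⟩
  · exact eqrel_mono (fun x y h => Or.inr h)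

end SqFreePaper
end

section
/- Let x_1,…,x_n be a linear decomposition of a word x with left and right complementary members p_i, q_i. Then for each i with 1 ≤ i ≤ n, there exist words f and g such that x_1·x_2⋯x_{i-1} =_π f·p_i and x_{i+1}·x_{i+2}⋯x_n =_π q_i·g. -/
namespace SqFreePaper

variable {A : Type*}

lemma oneStep_symm' {π : List A → List A → Prop} {a b : List A} (h : OneStep π a b) :
    OneStep π b a := by
  obtain ⟨r, s, u, v, h1, h2, h3⟩ := h
  exact ⟨r, s, v, u, h2, h1, h3.symm⟩

lemma eqRel_symm' {π : List A → List A → Prop} {a b : List A} (h : EqRel π a b) :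
    EqRel π b a :=
  (@Relation.ReflTransGen.symmetric _ (OneStep π) ⟨fun _ _ hs => oneStep_symm' hs⟩).symm _ _ h

lemma eqRel_mono' {π₁ π₂ : List A → List A → Prop} (h : ∀ a b, π₁ a b → π₂ a b)
    {a b : List A} (he : EqRel π₁ a b) : EqRel π₂ a b := by
  refine Relation.ReflTransGen.mono ?_ _ _ he
  rintro x y ⟨r, s, u, v, h1, h2, h3⟩
  exact ⟨r, s, u, v, h1, h2, h3.imp (h u v) (h v u)⟩

lemma eqRel_append' {π : List A → List A → Prop} (c d : List A) {a b : List A}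
    (h : EqRel π a b) : EqRel π (c ++ a ++ d) (c ++ b ++ d) := by
  induction h with
  | refl => exact .refl
  | tail _ hstep ih =>
    refine ih.tail ?_
    obtain ⟨r, s, u, v, h1, h2, h3⟩ := hstep
    exact ⟨c ++ r, s ++ d, u, v, by simp [h1], by simp [h2], h3⟩

lemma family_dwords_eqRel' {n : ℕ} (u : Fin n → List A) {a b : List A}
    (ha : a ∈ DWords (FamilyRel u)) (hb : b ∈ DWords (FamilyRel u)) :
    EqRel (FamilyRel u) a b := by
  obtain ⟨i, rfl⟩ : ∃ i, a = u i := by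
    obtain ⟨y, h | h⟩ := ha
    · obtain ⟨i, j, _, rfl, _⟩ := h; exact ⟨i, rfl⟩
    · obtain ⟨i, j, _, _, rfl⟩ := h; exact ⟨j, rfl⟩
  obtain ⟨j, rfl⟩ : ∃ j, b = u j := by
    obtain ⟨y, h | h⟩ := hb
    · obtain ⟨i, j, _, rfl, _⟩ := h; exact ⟨i, rfl⟩
    · obtain ⟨i, j, _, _, rfl⟩ := h; exact ⟨j, rfl⟩
  rcases lt_trichotomy i j with h | h | h
  · exact Relation.ReflTransGen.single
      ⟨[], [], u i, u j, by simp, by simp, Or.inl ⟨i, j, h, rfl, rfl⟩⟩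
  · rw [h]; exact .refl
  · exact Relation.ReflTransGen.single
      ⟨[], [], u i, u j, by simp, by simp, Or.inr ⟨j, i, h, rfl, rfl⟩⟩

lemma sim_eqRel' {nu nv : ℕ} (u : Fin nu → List A) (v : Fin nv → List A)
    {σ ρ : List A → List A → Prop} (hσ : σ = FamilyRel u) (hρ : ρ = FamilyRel v)
    {a b : List A} (h : Sim σ ρ a b) : EqRel (PiRel σ ρ) a b := by
  have hσπ : ∀ {a b : List A}, EqRel σ a b → EqRel (PiRel σ ρ) a b :=
    fun h => eqRel_mono' (fun _ _ h => Or.inl h) h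
  have hρπ : ∀ {a b : List A}, EqRel ρ a b → EqRel (PiRel σ ρ) a b :=
    fun h => eqRel_mono' (fun _ _ h => Or.inr h) h
  rcases h with ⟨⟨wa, hwa, hea⟩, ⟨wb, hwb, heb⟩⟩ | ⟨⟨wa, hwa, hea⟩, ⟨wb, hwb, heb⟩⟩
  · have h2 : EqRel σ wa wb := by subst hσ; exact family_dwords_eqRel' u hwa hwb
    exact ((hρπ (eqRel_symm' hea)).trans (hσπ h2)).trans (hρπ heb)
  · have h2 : EqRel ρ wa wb := by subst hρ; exact family_dwords_eqRel' v hwa hwb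
    exact ((hσπ (eqRel_symm' hea)).trans (hρπ h2)).trans (hσπ heb)

lemma wordSeg_zero' (x : ℕ → List A) (a : ℕ) : wordSeg x a 0 = [] := rfl

lemma wordSeg_succ_left' (x : ℕ → List A) (a len : ℕ) :
    wordSeg x a (len + 1) = x a ++ wordSeg x (a + 1) len := by
  simp [wordSeg, List.range'_succ]

lemma wordSeg_succ_right' (x : ℕ → List A) (a len : ℕ) :
    wordSeg x a (len + 1) = wordSeg x a len ++ x (a + len) := by
  simp [wordSeg, List.range'_concat]

/-- Lemma 2.1: for any linear decomposition, the prefix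
`x_1⋯x_{i-1}` is `=_π`-equal to some `f ++ p_i` and the suffix
`x_{i+1}⋯x_n` to `q_i ++ g`. -/
theorem linDecomp_prefix_suffix {A : Type*} {nu nv : ℕ}
    (u : Fin nu → List A) (v : Fin nv → List A)
    (hu : Function.Injective u) (hv : Function.Injective v)
    (σ ρ : List A → List A → Prop) (hσ : σ = FamilyRel u) (hρ : ρ = FamilyRel v)
    (hset : SettingHyps σ ρ)
    (n : ℕ) (x p q : ℕ → List A) (hlin : IsLinDecomp σ ρ n x p q) :
    ∀ i, 1 ≤ i → i ≤ n → ∃ f g : List A,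
      EqRel (PiRel σ ρ) (wordSeg x 1 (i-1)) (f ++ p i) ∧
      EqRel (PiRel σ ρ) (wordSeg x (i+1) (n-i)) (q i ++ g) := by
  obtain ⟨hn, hx, ⟨uu, vv, hSim1, hSim2⟩, hq0, hp1, hqn, -⟩ := hlin
  have simPi : ∀ {a b : List A}, Sim σ ρ a b → EqRel (PiRel σ ρ) a b :=
    fun h => sim_eqRel' u v hσ hρ h
  have pref : ∀ i, 1 ≤ i → i ≤ n →
      ∃ f, EqRel (PiRel σ ρ) (wordSeg x 1 (i-1)) (f ++ p i) := by
    refine Nat.le_induction ?_ ?_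
    · intro _
      refine ⟨[], ?_⟩
      simp only [Nat.sub_self, wordSeg_zero', hp1, List.nil_append]
      exact .refl
    · intro i hi IH hi1n
      have hin : i < n := by omega
      obtain ⟨f, hf⟩ := IH (by omega)
      have hseg : wordSeg x 1 i = wordSeg x 1 (i-1) ++ x i := by
        have h1 : i = (i - 1) + 1 := by omega
        rw [h1, wordSeg_succ_right']
        congr 2
        omega
      have key : EqRel (PiRel σ ρ) (wordSeg x 1 i) ((f ++ p i) ++ x i) := by
        rw [hseg]
        have := eqRel_append' ([] : List A) (x i) hf
        simpa using this
      have hstep : wordSeg x 1 (i + 1 - 1) = wordSeg x 1 i := by norm_num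
      rcases hq0 i hi hin with hqi | hpi
      · have hs := simPi (hSim2 i hi hin)
        rw [hqi, List.append_nil] at hs
        have hs' : EqRel (PiRel σ ρ) (f ++ (p i ++ x i)) (f ++ (vv i ++ p (i+1))) := by
          have := eqRel_append' f ([] : List A) hs
          simpa using this
        refine ⟨f ++ vv i, ?_⟩
        rw [hstep]
        have : EqRel (PiRel σ ρ) (wordSeg x 1 i) (f ++ (vv i ++ p (i+1))) :=
          (key.trans (by simpa [List.append_assoc, EqRel] using hs'))
        simpa [List.append_assoc] using this
      · refine ⟨f ++ p i ++ x i, ?_⟩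
        rw [hstep, hpi, List.append_nil]
        exact key
  have suff : ∀ k, ∀ i, 1 ≤ i → i ≤ n → n - i = k →
      ∃ g, EqRel (PiRel σ ρ) (wordSeg x (i+1) (n-i)) (q i ++ g) := by
    intro k
    induction k with
    | zero =>
      intro i h1 h2 h3
      have hi : i = n := by omega
      subst hi
      refine ⟨[], ?_⟩
      simp only [h3, wordSeg_zero', hqn, List.nil_append]
      exact .refl
    | succ k IH =>
      intro i h1 h2 h3
      have hin : i < n := by omega
      obtain ⟨g, hg⟩ := IH (i+1) (by omega) (by omega) (by omega)
      have hseg : wordSeg x (i+1) (n-i) = x (i+1) ++ wordSeg x (i+2) (n-(i+1)) := by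
        have h4 : n - i = (n - (i+1)) + 1 := by omega
        rw [h4, wordSeg_succ_left']
      have key : EqRel (PiRel σ ρ) (wordSeg x (i+1) (n-i))
          (x (i+1) ++ (q (i+1) ++ g)) := by
        rw [hseg]
        have := eqRel_append' (x (i+1)) ([] : List A) hg
        simpa using this
      rcases hq0 i h1 hin with hqi | hpi
      · refine ⟨x (i+1) ++ (q (i+1) ++ g), ?_⟩
        rw [hqi, List.nil_append]
        exact key
      · have hs := simPi (hSim1 (i+1) (by omega) (by omega))
        rw [hpi, List.nil_append, Nat.add_sub_cancel] at hs
        have hs' : EqRel (PiRel σ ρ) ((x (i+1) ++ q (i+1)) ++ g)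
            ((q i ++ uu (i+1)) ++ g) := by
          have := eqRel_append' ([] : List A) g hs
          simpa using this
        refine ⟨uu (i+1) ++ g, ?_⟩
        have : EqRel (PiRel σ ρ) (wordSeg x (i+1) (n-i)) ((q i ++ uu (i+1)) ++ g) :=
          key.trans (by simpa [List.append_assoc, EqRel] using hs')
        simpa [List.append_assoc] using this
  intro i hi1 hin
  obtain ⟨f, hf⟩ := pref i hi1 hin
  obtain ⟨g, hg⟩ := suff (n - i) i hi1 hin rfl
  exact ⟨f, g, hf, hg⟩
end SqFreePaper
end
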